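/- Let (X,d) be a metric space and let M be a positive integer such that for every x ∈ X and every r > 0, any subset of the closed ball B^cl(x,r) whose distinct points are at pairwise distance strictly greater than r has cardinality at most M. Let μ be a Borel measure on X that is finite on every bounded Borel set and positive on every nonempty open set. Then for every s > 0 and almost every y ∈ X, the conjugate function satisfies a_s(y) ≤ M. -/

import Mathlib

open MeasureTheory Metric ENNReal

section Aux

variable {X : Type*} [MetricSpace X] [MeasurableSpace X] [BorelSpace X]

/-- Measurability of `x ↦ ν (closedBall x s)` for a measure finite on closed balls. -/
lemma measurable_measure_closedBall' (ν : Measure X) (s : ℝ)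
    (hν : ∀ x r, ν (closedBall x r) ≠ ⊤) :
    Measurable fun x => ν (closedBall x s) := by
  have husc : ∀ t : ℝ≥0∞, IsOpen {x : X | ν (closedBall x s) < t} := by
    intro t
    rw [Metric.isOpen_iff]
    intro x hx
    have hseq : closedBall x s = ⋂ k : ℕ, closedBall x (s + ((k : ℝ) + 1)⁻¹) := by
      ext u
      simp only [mem_closedBall, Set.mem_iInter]
      constructor
      · intro h k
        have h0 : (0:ℝ) < ((k:ℝ)+1)⁻¹ := by positivity
        linarith
      · intro h
        by_contra hlt
        push_neg at hlt
        obtain ⟨k, hk⟩ := exists_nat_one_div_lt (sub_pos.mpr hlt)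
        have hks := h k
        rw [one_div] at hk
        linarith
    have hanti : Antitone fun k : ℕ => closedBall x (s + ((k : ℝ) + 1)⁻¹) := by
      intro k l hkl
      refine closedBall_subset_closedBall ?_
      have hkl' : ((k : ℝ) + 1) ≤ ((l : ℝ) + 1) := by
        have : (k : ℝ) ≤ (l : ℝ) := Nat.cast_le.mpr hkl
        linarith
      have : ((l:ℝ)+1)⁻¹ ≤ ((k:ℝ)+1)⁻¹ := inv_anti₀ (by positivity) hkl'
      linarith
    have hiInf : ν (closedBall x s) = ⨅ k : ℕ, ν (closedBall x (s + ((k : ℝ) + 1)⁻¹)) := by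
      rw [hseq]
      exact hanti.measure_iInter (fun k => measurableSet_closedBall.nullMeasurableSet)
        ⟨0, hν _ _⟩
    simp only [Set.mem_setOf_eq] at hx
    rw [hiInf] at hx
    obtain ⟨k, hk⟩ := iInf_lt_iff.mp hx
    refine ⟨((k : ℝ) + 1)⁻¹, by positivity, fun z hz => ?_⟩
    have hsub : closedBall z s ⊆ closedBall x (s + ((k : ℝ) + 1)⁻¹) := by
      intro u hu
      rw [mem_closedBall] at hu ⊢
      have hzx : dist z x < ((k : ℝ) + 1)⁻¹ := hz
      calc dist u x ≤ dist u z + dist z x := dist_triangle _ _ _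
        _ ≤ s + ((k : ℝ) + 1)⁻¹ := by linarith
    show ν (closedBall z s) < t
    exact lt_of_le_of_lt (measure_mono hsub) hk
  refine measurable_of_Iio fun t => ?_
  exact (husc t).measurableSet

lemma card_filter_val_lt (n m : ℕ) (hm : m ≤ n) :
    (Finset.filter (fun j : Fin n => (j : ℕ) < m) Finset.univ).card = m := by
  have heq : Finset.filter (fun j : Fin n => (j : ℕ) < m) Finset.univ
      = Finset.map (Fin.castLEEmb hm) Finset.univ := by
    ext j
    simp only [Finset.mem_filter, Finset.mem_univ, true_and, Finset.mem_map,
      Fin.castLEEmb_apply]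
    constructor
    · intro hj
      exact ⟨⟨(j : ℕ), hj⟩, Fin.ext rfl⟩
    · rintro ⟨k, rfl⟩
      simpa using k.2
  rw [heq, Finset.card_map, Finset.card_univ, Fintype.card_fin]

/-- Under the positivity and finiteness assumptions, the space is second countable. -/
lemma secondCountable_of_measure (μ : Measure X)
    (hfin : ∀ s : Set X, Bornology.IsBounded s → μ s < ⊤)
    (hpos : ∀ U : Set X, IsOpen U → U.Nonempty → 0 < μ U) :
    SecondCountableTopology X := by
  refine Metric.secondCountable_of_almost_dense_set fun ε hε => ?_
  by_cases hX : Nonempty X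
  swap
  · exact ⟨∅, Set.countable_empty, fun x => (hX ⟨x⟩).elim⟩
  obtain ⟨x₀⟩ := hX
  -- countability of separated bounded sets
  have hcount : ∀ (t : Set X), (t.Pairwise fun a b => ε < dist a b) → ∀ R : ℝ,
      t ⊆ closedBall x₀ R → t.Countable := by
    intro t hsep R htR
    have hcover : t = ⋃ k : ℕ, {z ∈ t | ((k : ℝ≥0∞) + 1)⁻¹ < μ (ball z (ε/2))} := by
      apply Set.Subset.antisymm
      · intro z hz
        have hball : 0 < μ (ball z (ε/2)) :=
          hpos _ isOpen_ball ⟨z, mem_ball_self (by positivity)⟩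
        obtain ⟨k, hk⟩ := ENNReal.exists_inv_nat_lt hball.ne'
        have hk' : ((k : ℝ≥0∞) + 1)⁻¹ < μ (ball z (ε/2)) :=
          lt_of_le_of_lt (ENNReal.inv_le_inv' (le_add_of_nonneg_right zero_le_one)) hk
        exact Set.mem_iUnion.mpr ⟨k, hz, hk'⟩
      · exact Set.iUnion_subset fun k => fun z hz => hz.1
    rw [hcover]
    refine Set.countable_iUnion fun k => ?_
    refine Set.Finite.countable ?_
    by_contra hfin'
    rw [← Set.not_infinite, not_not] at hfin'
    obtain ⟨N, hN⟩ := ENNReal.exists_nat_gt (hfin (closedBall x₀ (R + ε))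
      isBounded_closedBall).ne
    obtain ⟨F, hFsub, hFcard⟩ := hfin'.exists_subset_card_eq ((k + 1) * N)
    have hdisj : (↑F : Set X).PairwiseDisjoint (fun z => ball z (ε/2)) := by
      intro z1 h1 z2 h2 hne
      have hz1 : z1 ∈ t := (hFsub h1).1
      have hz2 : z2 ∈ t := (hFsub h2).1
      exact Metric.ball_disjoint_ball (by linarith [hsep hz1 hz2 hne])
    have hsum : μ (⋃ z ∈ F, ball z (ε/2)) = ∑ z ∈ F, μ (ball z (ε/2)) :=
      measure_biUnion_finset hdisj (fun z _ => measurableSet_ball)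
    have hle1 : (F.card : ℝ≥0∞) * ((k : ℝ≥0∞) + 1)⁻¹ ≤ ∑ z ∈ F, μ (ball z (ε/2)) := by
      have := Finset.card_nsmul_le_sum F (fun z => μ (ball z (ε/2))) (((k : ℝ≥0∞) + 1)⁻¹)
        (fun z hz => (hFsub hz).2.le)
      simpa [nsmul_eq_mul] using this
    have hle2 : μ (⋃ z ∈ F, ball z (ε/2)) ≤ μ (closedBall x₀ (R + ε)) := by
      refine measure_mono (Set.iUnion₂_subset fun z hz => ?_)
      intro u hu
      have hz' : z ∈ closedBall x₀ R := htR (hFsub hz).1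
      rw [mem_closedBall] at hz' ⊢
      rw [mem_ball] at hu
      calc dist u x₀ ≤ dist u z + dist z x₀ := dist_triangle _ _ _
        _ ≤ R + ε := by linarith
    have hNle : (N : ℝ≥0∞) ≤ μ (closedBall x₀ (R + ε)) := by
      calc (N : ℝ≥0∞) = ((k : ℝ≥0∞) + 1) * (N : ℝ≥0∞) * ((k : ℝ≥0∞) + 1)⁻¹ := by
            rw [mul_comm ((k : ℝ≥0∞) + 1) (N : ℝ≥0∞), mul_assoc,
              ENNReal.mul_inv_cancel (by simp) (by simp [ENNReal.add_eq_top]), mul_one]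
        _ = (F.card : ℝ≥0∞) * ((k : ℝ≥0∞) + 1)⁻¹ := by
            rw [hFcard]; push_cast; ring
        _ ≤ ∑ z ∈ F, μ (ball z (ε/2)) := hle1
        _ = μ (⋃ z ∈ F, ball z (ε/2)) := hsum.symm
        _ ≤ μ (closedBall x₀ (R + ε)) := hle2
    exact absurd hN (not_lt.mpr hNle)
  -- Zorn's lemma: maximal separated set
  obtain ⟨T, hTmax⟩ := zorn_subset {t : Set X | t.Pairwise fun a b => ε < dist a b} (by
    intro c hcS hchain
    refine ⟨⋃₀ c, ?_, fun s hs => Set.subset_sUnion_of_mem hs⟩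
    intro a ha b hb hne
    obtain ⟨ta, hta, hat⟩ := ha
    obtain ⟨tb, htb, hbt⟩ := hb
    rcases hchain.total hta htb with h | h
    · exact hcS htb (h hat) hbt hne
    · exact hcS hta hat (h hbt) hne)
  have hTsep : T.Pairwise fun a b => ε < dist a b := hTmax.prop
  have hTdense : ∀ x : X, ∃ z ∈ T, dist x z ≤ ε := by
    intro x
    by_contra hcon
    push_neg at hcon
    have hxT : x ∉ T := by
      intro hxT
      have := hcon x hxT
      rw [dist_self] at this
      linarith
    have hins : insert x T ∈ {t : Set X | t.Pairwise fun a b => ε < dist a b} := by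
      intro a ha b hb hne
      rcases ha with rfl | ha
      · rcases hb with rfl | hb
        · exact absurd rfl hne
        · exact hcon b hb
      · rcases hb with rfl | hb
        · rw [dist_comm]; exact hcon a ha
        · exact hTsep ha hb hne
    have := hTmax.2 hins (Set.subset_insert x T)
    exact hxT (this (Set.mem_insert x T))
  -- countability of T
  have hTcount : T.Countable := by
    have : T = ⋃ n : ℕ, (T ∩ closedBall x₀ n) := by
      apply Set.Subset.antisymm
      · intro z hz
        obtain ⟨n, hn⟩ := exists_nat_ge (dist z x₀)
        exact Set.mem_iUnion.mpr ⟨n, hz, mem_closedBall.mpr hn⟩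
      · exact Set.iUnion_subset fun n => Set.inter_subset_left
    rw [this]
    exact Set.countable_iUnion fun n =>
      hcount _ (hTsep.mono Set.inter_subset_left) n Set.inter_subset_right
  exact ⟨T, hTcount, hTdense⟩

/-- Key lemma: for a probability measure concentrated on `closedBall y s`,
the "self-mass" integral is bounded by the net constant. -/
lemma key_lemma [SecondCountableTopology X] (M : ℕ) (y : X) (s : ℝ) (hs : 0 < s)
    (hnet' : ∀ t : Finset X, (↑t : Set X) ⊆ closedBall y s →
      (∀ a ∈ t, ∀ b ∈ t, a ≠ b → s < dist a b) → t.card ≤ M)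
    (p : Measure X) [IsProbabilityMeasure p] (hp : p (closedBall y s) = 1) :
    ∫⁻ x, (p (closedBall x s))⁻¹ ∂p ≤ (M : ℝ≥0∞) := by
  classical
  set a : X → ℝ≥0∞ := fun v => p (closedBall v s) with ha_def
  have ha : Measurable a := measurable_measure_closedBall' p s (fun _ _ => measure_ne_top p _)
  have ha1 : ∀ v, a v ≤ 1 := fun v => prob_le_one
  -- finite-sample bound
  have hn : ∀ n : ℕ, ∑ i : Fin (n + 1), ∫⁻ v, (1 - a v) ^ (i : ℕ) ∂p ≤ (M : ℝ≥0∞) := by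
    intro n
    set P : Measure (Fin (n + 1) → X) := Measure.pi (fun _ => p) with hP
    set A : Fin (n + 1) → Set (Fin (n + 1) → X) :=
      fun i => {ω | ∀ k, k < i → s < dist (ω k) (ω i)} with hA_def
    have hAmeas : ∀ i, MeasurableSet (A i) := by
      intro i
      have : A i = ⋂ k, ⋂ (_ : k < i), {ω : Fin (n + 1) → X | s < dist (ω k) (ω i)} := by
        ext ω; simp [hA_def]
      rw [this]
      refine MeasurableSet.iInter fun k => MeasurableSet.iInter fun _ => ?_
      exact measurableSet_lt measurable_const
        ((measurable_pi_apply k).dist (measurable_pi_apply i))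
    -- the measure of A i
    have hPAi : ∀ i, P (A i) = ∫⁻ v, (1 - a v) ^ (i : ℕ) ∂p := by
      intro i
      set Ahat : Set (X × (Fin n → X)) :=
        {z | ∀ j : Fin n, (j : ℕ) < (i : ℕ) → s < dist (z.2 j) z.1} with hAhat_def
      have hAhatMeas : MeasurableSet Ahat := by
        have : Ahat = ⋂ j : Fin n, ⋂ (_ : (j : ℕ) < (i : ℕ)),
            {z : X × (Fin n → X) | s < dist (z.2 j) z.1} := by
          ext z; simp [hAhat_def]
        rw [this]
        refine MeasurableSet.iInter fun j => MeasurableSet.iInter fun _ => ?_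
        exact measurableSet_lt measurable_const
          (((measurable_pi_apply j).comp measurable_snd).dist measurable_fst)
      have hmp := measurePreserving_piFinSuccAbove (fun _ : Fin (n + 1) => p) i
      have hpre : A i = (MeasurableEquiv.piFinSuccAbove (fun _ => X) i) ⁻¹' Ahat := by
        ext ω
        simp only [hA_def, Set.mem_setOf_eq, Set.mem_preimage, hAhat_def,
          MeasurableEquiv.piFinSuccAbove_apply, Fin.insertNthEquiv_symm_apply,
          Fin.removeNth]
        constructor
        · intro h j hj
          have hcast : Fin.castSucc j < i := by
            rw [Fin.lt_def]; simpa using hj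
          rw [Fin.succAbove_of_castSucc_lt _ _ hcast]
          exact h _ hcast
        · intro h k hk
          have hkn : (k : ℕ) < n := lt_of_lt_of_le (Fin.lt_def.mp hk) (Fin.is_le i)
          have h1 : ((⟨(k : ℕ), hkn⟩ : Fin n) : ℕ) < (i : ℕ) := Fin.lt_def.mp hk
          have hcast : Fin.castSucc (⟨(k : ℕ), hkn⟩ : Fin n) < i := by
            rw [Fin.lt_def]; simpa using h1
          have h2 : i.succAbove (⟨(k : ℕ), hkn⟩ : Fin n) = k := by
            rw [Fin.succAbove_of_castSucc_lt _ _ hcast]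
            exact Fin.ext rfl
          have := h _ h1
          rwa [h2] at this
      rw [hpre, hmp.measure_preimage hAhatMeas.nullMeasurableSet,
        Measure.prod_apply hAhatMeas]
      refine lintegral_congr fun v => ?_
      have hsec : (Prod.mk v ⁻¹' Ahat) =
          Set.pi Set.univ (fun j : Fin n =>
            if (j : ℕ) < (i : ℕ) then (closedBall v s)ᶜ else Set.univ) := by
        ext rest
        simp only [Set.mem_preimage, hAhat_def, Set.mem_setOf_eq, Set.mem_pi, Set.mem_univ,
          forall_true_left]
        constructor
        · intro h j
          by_cases hj : (j : ℕ) < (i : ℕ)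
          · simp only [hj, if_true, Set.mem_compl_iff, mem_closedBall, not_le]
            exact h j hj
          · simp [hj]
        · intro h j hj
          have := h j
          simp only [hj, if_true, Set.mem_compl_iff, mem_closedBall, not_le] at this
          exact this
      rw [hsec, Measure.pi_pi]
      have hfac : ∀ j : Fin n,
          p (if (j : ℕ) < (i : ℕ) then (closedBall v s)ᶜ else Set.univ)
          = if (j : ℕ) < (i : ℕ) then 1 - a v else 1 := by
        intro j
        by_cases hj : (j : ℕ) < (i : ℕ)
        · simp only [hj, if_true]
          rw [measure_compl measurableSet_closedBall (measure_ne_top p _), measure_univ]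
        · simp [hj]
      simp_rw [hfac]
      rw [Finset.prod_ite (f := fun _ => 1 - a v) (g := fun _ => (1 : ℝ≥0∞)),
        Finset.prod_const, Finset.prod_const_one, mul_one,
        card_filter_val_lt n (i : ℕ) (Fin.is_le i)]
    -- the sum of the measures of the A i is at most M
    have hsum : ∑ i : Fin (n + 1), P (A i) ≤ (M : ℝ≥0∞) := by
      have h1 : ∑ i : Fin (n + 1), P (A i)
          = ∫⁻ ω, ∑ i, (A i).indicator (fun _ => (1 : ℝ≥0∞)) ω ∂P := by
        rw [lintegral_finset_sum _ (fun i _ => measurable_const.indicator (hAmeas i))]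
        refine Finset.sum_congr rfl fun i _ => ?_
        exact (lintegral_indicator_one (hAmeas i)).symm
      rw [h1]
      have hgood : ∀ᵐ ω ∂P, ∀ j, ω j ∈ closedBall y s := by
        rw [ae_iff]
        have hset : {ω : Fin (n + 1) → X | ¬ ∀ j, ω j ∈ closedBall y s}
            = ⋃ j, (fun ω : Fin (n + 1) → X => ω j) ⁻¹' (closedBall y s)ᶜ := by
          ext ω; simp [not_forall]
        rw [hset]
        refine measure_iUnion_null fun j => ?_
        have hset2 : (fun ω : Fin (n + 1) → X => ω j) ⁻¹' (closedBall y s)ᶜ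
            = Set.pi Set.univ (fun k => if k = j then (closedBall y s)ᶜ else Set.univ) := by
          ext ω
          simp only [Set.mem_preimage, Set.mem_pi, Set.mem_univ, forall_true_left]
          constructor
          · intro h k
            by_cases hk : k = j
            · subst hk; simpa using h
            · simp [hk]
          · intro h
            have := h j
            simpa using this
        rw [hset2, Measure.pi_pi]
        refine Finset.prod_eq_zero (Finset.mem_univ j) ?_
        simp [measure_compl measurableSet_closedBall (measure_ne_top p _), hp]
      have hae : ∀ᵐ ω ∂P, ∑ i, (A i).indicator (fun _ => (1 : ℝ≥0∞)) ω ≤ (M : ℝ≥0∞) := by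
        filter_upwards [hgood] with ω hω
        have hsum_card : (∑ i, (A i).indicator (fun _ => (1 : ℝ≥0∞)) ω)
            = ((Finset.univ.filter (fun i : Fin (n + 1) => ω ∈ A i)).card : ℝ≥0∞) := by
          rw [← Finset.sum_boole]
          refine Finset.sum_congr rfl fun i _ => ?_
          simp [Set.indicator_apply]
        rw [hsum_card]
        set I := Finset.univ.filter (fun i : Fin (n + 1) => ω ∈ A i) with hI
        have hinj : Set.InjOn ω ↑I := by
          intro i hi j hj hij
          by_contra hne
          have hs' : ∀ i' j' : Fin (n + 1), i' ∈ I → j' ∈ I → i' < j' → ω i' ≠ ω j' := by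
            intro i' j' hi' hj' hlt heq
            have hj'' : ω ∈ A j' := (Finset.mem_filter.mp hj').2
            have := hj'' i' hlt
            rw [heq, dist_self] at this
            linarith
          rcases lt_or_gt_of_ne hne with h | h
          · exact hs' i j hi hj h hij
          · exact hs' j i hj hi h hij.symm
        have hcard : (I.image ω).card = I.card := Finset.card_image_of_injOn hinj
        have hsub : (↑(I.image ω) : Set X) ⊆ closedBall y s := by
          intro x hx
          simp only [Finset.coe_image, Set.mem_image, Finset.mem_coe] at hx
          obtain ⟨i, _, rfl⟩ := hx
          exact hω i
        have hsep : ∀ u ∈ I.image ω, ∀ w ∈ I.image ω, u ≠ w → s < dist u w := by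
          intro u hu w hw huw
          obtain ⟨i1, hi1, rfl⟩ := Finset.mem_image.mp hu
          obtain ⟨i2, hi2, rfl⟩ := Finset.mem_image.mp hw
          have hne : i1 ≠ i2 := fun h => huw (by rw [h])
          rcases lt_or_gt_of_ne hne with h | h
          · exact (Finset.mem_filter.mp hi2).2 i1 h
          · rw [dist_comm]
            exact (Finset.mem_filter.mp hi1).2 i2 h
        have hMle := hnet' (I.image ω) hsub hsep
        rw [hcard] at hMle
        exact_mod_cast Nat.cast_le.mpr hMle
      calc ∫⁻ ω, ∑ i, (A i).indicator (fun _ => (1 : ℝ≥0∞)) ω ∂P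
          ≤ ∫⁻ _, (M : ℝ≥0∞) ∂P := lintegral_mono_ae hae
        _ = (M : ℝ≥0∞) := by
            rw [lintegral_const]
            have : P Set.univ = 1 := by
              rw [hP, Measure.pi_univ]
              simp [measure_univ]
            rw [this, mul_one]
    calc ∑ i : Fin (n + 1), ∫⁻ v, (1 - a v) ^ (i : ℕ) ∂p
        = ∑ i : Fin (n + 1), P (A i) := by
          refine Finset.sum_congr rfl fun i _ => (hPAi i).symm
      _ ≤ (M : ℝ≥0∞) := hsum
  -- pass to the limit
  have htsum : ∑' k : ℕ, ∫⁻ v, (1 - a v) ^ k ∂p ≤ (M : ℝ≥0∞) := by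
    rw [ENNReal.tsum_eq_iSup_sum]
    refine iSup_le fun F => ?_
    obtain ⟨m, hFm⟩ := F.exists_nat_subset_range
    calc ∑ k ∈ F, ∫⁻ v, (1 - a v) ^ k ∂p
        ≤ ∑ k ∈ Finset.range (m + 1), ∫⁻ v, (1 - a v) ^ k ∂p :=
          Finset.sum_le_sum_of_subset
            (hFm.trans (Finset.range_subset_range.mpr (Nat.le_succ m)))
      _ = ∑ i : Fin (m + 1), ∫⁻ v, (1 - a v) ^ (i : ℕ) ∂p :=
          (Fin.sum_univ_eq_sum_range (fun k => ∫⁻ v, (1 - a v) ^ k ∂p) (m + 1)).symm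
      _ ≤ (M : ℝ≥0∞) := hn m
  have heq : ∫⁻ v, (a v)⁻¹ ∂p = ∑' k : ℕ, ∫⁻ v, (1 - a v) ^ k ∂p := by
    rw [← lintegral_tsum (f := fun k v => (1 - a v) ^ k) (fun k => ((measurable_const.sub ha).pow_const k).aemeasurable)]
    refine lintegral_congr fun v => ?_
    rw [ENNReal.tsum_geometric, ENNReal.sub_sub_cancel one_ne_top (ha1 v)]
  calc ∫⁻ x, (p (closedBall x s))⁻¹ ∂p = ∫⁻ v, (a v)⁻¹ ∂p := rfl
    _ = ∑' k : ℕ, ∫⁻ v, (1 - a v) ^ k ∂p := heq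
    _ ≤ (M : ℝ≥0∞) := htsum

end Aux

/-- The conjugate function `a_s(y) = ∫_X 1_{B^cl(y,s)}(x) / μ(B^cl(x,s)) dμ(x)`. -/
noncomputable def conjFn {X : Type*} [MetricSpace X] [MeasurableSpace X]
    (μ : Measure X) (s : ℝ) (y : X) : ℝ≥0∞ :=
  ∫⁻ x in closedBall y s, (μ (closedBall x s))⁻¹ ∂μ

/-- If every strict `r`-net inside a closed `r`-ball has at most `M` points, then
for every `s > 0` the conjugate function satisfies `a_s(y) ≤ M` for almost every `y`. -/
theorem stmt6 {X : Type*} [MetricSpace X] [MeasurableSpace X] [BorelSpace X]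
    (M : ℕ) (hM : 0 < M)
    (hnet : ∀ (x : X) (r : ℝ), 0 < r → ∀ t : Finset X,
      (↑t : Set X) ⊆ closedBall x r →
      (∀ a ∈ t, ∀ b ∈ t, a ≠ b → r < dist a b) → t.card ≤ M)
    (μ : Measure X)
    (hfin : ∀ s : Set X, Bornology.IsBounded s → μ s < ⊤)
    (hpos : ∀ U : Set X, IsOpen U → U.Nonempty → 0 < μ U) :
    ∀ s : ℝ, 0 < s → ∀ᵐ y ∂μ, conjFn μ s y ≤ (M : ℝ≥0∞) := by
  intro s hs
  haveI : SecondCountableTopology X := secondCountable_of_measure μ hfin hpos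
  refine ae_of_all _ fun y => ?_
  set B := closedBall y s with hB
  have hBmeas : MeasurableSet B := measurableSet_closedBall
  set c := μ B with hc
  have hc0 : c ≠ 0 := by
    have hlt : 0 < μ (ball y s) := hpos _ isOpen_ball ⟨y, mem_ball_self hs⟩
    have hle : μ (ball y s) ≤ c := measure_mono ball_subset_closedBall
    exact (lt_of_lt_of_le hlt hle).ne'
  have hctop : c ≠ ⊤ := (hfin B isBounded_closedBall).ne
  set p : Measure X := c⁻¹ • μ.restrict B with hpdef
  have hrB : μ.restrict B = c • p := by
    rw [hpdef, smul_smul, ENNReal.mul_inv_cancel hc0 hctop, one_smul]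
  have hpB : p B = 1 := by
    rw [hpdef]
    simp only [Measure.smul_apply, smul_eq_mul, Measure.restrict_apply hBmeas,
      Set.inter_self]
    exact ENNReal.inv_mul_cancel hc0 hctop
  have hprob : IsProbabilityMeasure p := by
    constructor
    rw [hpdef]
    simp only [Measure.smul_apply, smul_eq_mul, Measure.restrict_apply_univ]
    exact ENNReal.inv_mul_cancel hc0 hctop
  have hkey := key_lemma M y s hs (fun t h1 h2 => hnet y s hs t h1 h2) p hpB
  have hcinv_ne_top : c⁻¹ ≠ ⊤ := ENNReal.inv_ne_top.mpr hc0
  have hmono : ∀ x : X, (μ (closedBall x s))⁻¹ ≤ c⁻¹ * (p (closedBall x s))⁻¹ := by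
    intro x
    have h1 : (c • p) (closedBall x s) ≤ μ (closedBall x s) := by
      rw [← hrB, Measure.restrict_apply measurableSet_closedBall]
      exact measure_mono Set.inter_subset_left
    have h2 : (μ (closedBall x s))⁻¹ ≤ ((c • p) (closedBall x s))⁻¹ :=
      ENNReal.inv_le_inv' h1
    have h3 : ((c • p) (closedBall x s))⁻¹ = c⁻¹ * (p (closedBall x s))⁻¹ := by
      rw [Measure.smul_apply, smul_eq_mul, ENNReal.mul_inv (Or.inl hc0) (Or.inl hctop)]
    rw [h3] at h2
    exact h2
  have hcalc : conjFn μ s y ≤ c * (c⁻¹ * ∫⁻ x, (p (closedBall x s))⁻¹ ∂p) := by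
    calc conjFn μ s y = ∫⁻ x in B, (μ (closedBall x s))⁻¹ ∂μ := rfl
      _ ≤ ∫⁻ x in B, c⁻¹ * (p (closedBall x s))⁻¹ ∂μ := lintegral_mono fun x => hmono x
      _ = ∫⁻ x, c⁻¹ * (p (closedBall x s))⁻¹ ∂(c • p) := by rw [← hrB]
      _ = c * ∫⁻ x, c⁻¹ * (p (closedBall x s))⁻¹ ∂p := lintegral_smul_measure c _
      _ = c * (c⁻¹ * ∫⁻ x, (p (closedBall x s))⁻¹ ∂p) := by
          rw [lintegral_const_mul' _ _ hcinv_ne_top]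
  calc conjFn μ s y ≤ c * (c⁻¹ * ∫⁻ x, (p (closedBall x s))⁻¹ ∂p) := hcalc
    _ ≤ c * (c⁻¹ * (M : ℝ≥0∞)) := by
        exact mul_le_mul_right (mul_le_mul_right hkey _) _
    _ = (c * c⁻¹) * (M : ℝ≥0∞) := by rw [mul_assoc]
    _ = (M : ℝ≥0∞) := by rw [ENNReal.mul_inv_cancel hc0 hctop, one_mul]
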